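/- Let σ be a derangement of {1,…,r} (σ(i) ≠ i for all i), let s = #{i : σ(i) < i}, and suppose ht(σ) = Σ_{i=1}^r |σ(i) − i| = 2s(r − s). Then for every i ∈ {1,…,r}, σ(i) < i if and only if i > r − s; that is, the set of drop positions of σ is exactly {r−s+1, …, r} and the set of jump positions is exactly {1, …, r−s}. -/

import Mathlib

open scoped BigOperators

namespace PermStats

/-- The number of drops `c_<(σ) = #{i : σ(i) < i}` of a permutation of `Fin r`. -/
def drops {r : ℕ} (σ : Equiv.Perm (Fin r)) : ℕ :=
  (Finset.univ.filter fun i => σ i < i).card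

/-- The number of jumps `c_>(σ) = #{i : σ(i) > i}` of a permutation of `Fin r`. -/
def jumps {r : ℕ} (σ : Equiv.Perm (Fin r)) : ℕ :=
  (Finset.univ.filter fun i => i < σ i).card

/-- The height `ht(σ) = ∑_i |σ(i) - i|` of a permutation of `Fin r`. -/
def ht {r : ℕ} (σ : Equiv.Perm (Fin r)) : ℕ :=
  ∑ i : Fin r, Nat.dist ((σ i : ℕ)) (i : ℕ)

private lemma card_filter_coe (r : ℕ) (p : ℕ → Prop) [DecidablePred p] :
    (Finset.univ.filter fun i : Fin r => p (i : ℕ)).card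
      = ((Finset.range r).filter p).card := by
  refine Finset.card_bij (fun (i : Fin r) _ => (i : ℕ)) ?_ ?_ ?_
  · intro a ha
    simp only [Finset.mem_filter, Finset.mem_univ, true_and] at ha
    simp only [Finset.mem_filter, Finset.mem_range]
    exact ⟨a.isLt, ha⟩
  · intro a _ b _ h
    exact Fin.val_injective h
  · intro b hb
    simp only [Finset.mem_filter, Finset.mem_range] at hb
    exact ⟨⟨b, hb.1⟩, by simp [hb.2], rfl⟩

/-- If `σ` is a derangement of `{1,…,r}` with `s = c_<(σ)` drops and
`ht(σ) = 2s(r-s)`, then the drop positions are exactly the (1-based) positions `> r - s`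
and the jump positions are exactly the (1-based) positions `≤ r - s`.  (Here the 1-based
position of `i : Fin r` is `(i : ℕ) + 1`.) -/
theorem drops_iff_of_ht_eq (r : ℕ) (σ : Equiv.Perm (Fin r)) (hσ : ∀ i, σ i ≠ i)
    (hht : ht σ = 2 * drops σ * (r - drops σ)) :
    ∀ i : Fin r, (σ i < i ↔ r - drops σ < (i : ℕ) + 1) ∧
      (i < σ i ↔ (i : ℕ) + 1 ≤ r - drops σ) := by
  rcases Nat.eq_zero_or_pos r with hr | hr
  · subst hr; intro i; exact i.elim0
  set s := drops σ with hs
  set m := r - s with hm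
  have hDcard : (Finset.univ.filter fun i : Fin r => σ i < i).card = s := by rw [hs]; rfl
  have hne : ∀ i : Fin r, (σ i : ℕ) ≠ (i : ℕ) := fun i h => hσ i (Fin.val_injective h)
  have htri : ∀ i : Fin r, ¬ σ i < i ↔ i < σ i := by
    intro i
    rw [Fin.lt_def, Fin.lt_def]
    have := hne i
    omega
  have hsr : s ≤ r := by
    rw [← hDcard]
    simpa using Finset.card_filter_le (Finset.univ : Finset (Fin r)) (fun i => σ i < i)
  have hJcard : (Finset.univ.filter fun i : Fin r => i < σ i).card = m := by
    have h1 := Finset.card_filter_add_card_filter_not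
      (s := (Finset.univ : Finset (Fin r))) (fun i => σ i < i)
    have h2 : (Finset.univ.filter fun i : Fin r => ¬ σ i < i)
        = (Finset.univ.filter fun i : Fin r => i < σ i) :=
      Finset.filter_congr (fun i _ => by rw [htri i])
    rw [h2, hDcard] at h1
    simp only [Finset.card_univ, Fintype.card_fin] at h1
    omega
  have hm1 : 1 ≤ m := by
    rw [← hJcard]
    refine Finset.card_pos.mpr ⟨⟨0, hr⟩, ?_⟩
    simp only [Finset.mem_filter, Finset.mem_univ, true_and]
    rw [← htri, Fin.lt_def]
    have h0 : ((⟨0, hr⟩ : Fin r) : ℕ) = 0 := rfl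
    omega
  have hs1 : 1 ≤ s := by
    by_contra h
    have hs0 : s = 0 := by omega
    have hz : ht σ = 0 := by rw [hht, hs0]; simp
    have h0 : Nat.dist ((σ ⟨0, hr⟩ : ℕ)) ((⟨0, hr⟩ : Fin r) : ℕ) = 0 :=
      Finset.sum_eq_zero_iff.mp hz ⟨0, hr⟩ (Finset.mem_univ _)
    have := hne ⟨0, hr⟩
    have h1 : ((⟨0, hr⟩ : Fin r) : ℕ) = 0 := rfl
    simp only [Nat.dist] at h0
    omega
  have hrsm : s + m = r := by omega
  -- sum of the e_k
  have hsum_e : ∑ k ∈ Finset.range r,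
      (Finset.univ.filter fun i : Fin r => (σ i : ℕ) ≤ k ∧ k < (i : ℕ)).card
      = ∑ i : Fin r, ((i : ℕ) - (σ i : ℕ)) := by
    have h1 : ∀ k ∈ Finset.range r,
        (Finset.univ.filter fun i : Fin r => (σ i : ℕ) ≤ k ∧ k < (i : ℕ)).card
        = ∑ i : Fin r, if (σ i : ℕ) ≤ k ∧ k < (i : ℕ) then 1 else 0 :=
      fun k _ => Finset.card_filter _ _
    rw [Finset.sum_congr rfl h1, Finset.sum_comm]
    refine Finset.sum_congr rfl fun i _ => ?_
    rw [← Finset.card_filter]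
    have hfe : (Finset.range r).filter (fun k => (σ i : ℕ) ≤ k ∧ k < (i : ℕ))
        = Finset.Ico (σ i : ℕ) (i : ℕ) := by
      ext k
      simp only [Finset.mem_filter, Finset.mem_range, Finset.mem_Ico]
      have := i.isLt
      omega
    rw [hfe, Nat.card_Ico]
  have hsum_f : ∑ k ∈ Finset.range r,
      (Finset.univ.filter fun i : Fin r => (i : ℕ) ≤ k ∧ k < (σ i : ℕ)).card
      = ∑ i : Fin r, ((σ i : ℕ) - (i : ℕ)) := by
    have h1 : ∀ k ∈ Finset.range r,
        (Finset.univ.filter fun i : Fin r => (i : ℕ) ≤ k ∧ k < (σ i : ℕ)).card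
        = ∑ i : Fin r, if (i : ℕ) ≤ k ∧ k < (σ i : ℕ) then 1 else 0 :=
      fun k _ => Finset.card_filter _ _
    rw [Finset.sum_congr rfl h1, Finset.sum_comm]
    refine Finset.sum_congr rfl fun i _ => ?_
    rw [← Finset.card_filter]
    have hfe : (Finset.range r).filter (fun k => (i : ℕ) ≤ k ∧ k < (σ i : ℕ))
        = Finset.Ico (i : ℕ) (σ i : ℕ) := by
      ext k
      simp only [Finset.mem_filter, Finset.mem_range, Finset.mem_Ico]
      have := (σ i).isLt
      omega
    rw [hfe, Nat.card_Ico]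
  have hht2 : ∑ k ∈ Finset.range r,
      ((Finset.univ.filter fun i : Fin r => (σ i : ℕ) ≤ k ∧ k < (i : ℕ)).card
        + (Finset.univ.filter fun i : Fin r => (i : ℕ) ≤ k ∧ k < (σ i : ℕ)).card)
      = 2 * s * m := by
    rw [Finset.sum_add_distrib, hsum_e, hsum_f, ← hht]
    show _ = ∑ i : Fin r, Nat.dist ((σ i : ℕ)) (i : ℕ)
    rw [← Finset.sum_add_distrib]
    refine Finset.sum_congr rfl fun i _ => ?_
    show ((i : ℕ) - (σ i : ℕ)) + ((σ i : ℕ) - (i : ℕ))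
      = ((σ i : ℕ) - (i : ℕ)) + ((i : ℕ) - (σ i : ℕ))
    exact Nat.add_comm _ _
  -- counting lemmas
  have hcard_le : ∀ k : ℕ, k < r →
      (Finset.univ.filter fun i : Fin r => (i : ℕ) ≤ k).card = k + 1 := by
    intro k hk
    rw [card_filter_coe r (fun x => x ≤ k)]
    have h1 : (Finset.range r).filter (fun j => j ≤ k) = Finset.range (k + 1) := by
      ext j
      simp only [Finset.mem_filter, Finset.mem_range]
      omega
    rw [h1, Finset.card_range]
  have hcard_ge : ∀ k : ℕ,
      (Finset.univ.filter fun i : Fin r => k ≤ (i : ℕ)).card = r - k := by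
    intro k
    rw [card_filter_coe r (fun x => k ≤ x)]
    have h1 : (Finset.range r).filter (fun j => k ≤ j) = Finset.Ico k r := by
      ext j
      simp only [Finset.mem_filter, Finset.mem_range, Finset.mem_Ico]
      omega
    rw [h1, Nat.card_Ico]
  have hAB : ∀ k : ℕ, (Finset.univ.filter fun i : Fin r => (σ i : ℕ) ≤ k).card
      = (Finset.univ.filter fun i : Fin r => (i : ℕ) ≤ k).card := by
    intro k
    apply Finset.card_bij (fun i _ => σ i)
    · intro a ha
      simp only [Finset.mem_filter, Finset.mem_univ, true_and] at *
      exact ha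
    · intro a _ b _ h
      exact σ.injective h
    · intro b hb
      refine ⟨σ.symm b, ?_, by simp⟩
      simp only [Finset.mem_filter, Finset.mem_univ, true_and] at *
      simpa using hb
  -- e_k = f_k
  have hef : ∀ k : ℕ,
      (Finset.univ.filter fun i : Fin r => (σ i : ℕ) ≤ k ∧ k < (i : ℕ)).card
      = (Finset.univ.filter fun i : Fin r => (i : ℕ) ≤ k ∧ k < (σ i : ℕ)).card := by
    intro k
    have h1 := Finset.card_filter_add_card_filter_not
      (s := Finset.univ.filter fun i : Fin r => (σ i : ℕ) ≤ k) (fun i : Fin r => (i : ℕ) ≤ k)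
    have h2 := Finset.card_filter_add_card_filter_not
      (s := Finset.univ.filter fun i : Fin r => (i : ℕ) ≤ k) (fun i : Fin r => (σ i : ℕ) ≤ k)
    rw [Finset.filter_filter] at h1 h2
    rw [Finset.filter_filter] at h1 h2
    have e1 : (Finset.univ.filter fun i : Fin r => (σ i : ℕ) ≤ k ∧ ¬ (i : ℕ) ≤ k)
        = (Finset.univ.filter fun i : Fin r => (σ i : ℕ) ≤ k ∧ k < (i : ℕ)) :=
      Finset.filter_congr (fun i _ => by rw [Nat.not_le])
    have e2 : (Finset.univ.filter fun i : Fin r => (i : ℕ) ≤ k ∧ ¬ (σ i : ℕ) ≤ k)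
        = (Finset.univ.filter fun i : Fin r => (i : ℕ) ≤ k ∧ k < (σ i : ℕ)) :=
      Finset.filter_congr (fun i _ => by rw [Nat.not_le])
    have e3 : (Finset.univ.filter fun i : Fin r => (i : ℕ) ≤ k ∧ (σ i : ℕ) ≤ k)
        = (Finset.univ.filter fun i : Fin r => (σ i : ℕ) ≤ k ∧ (i : ℕ) ≤ k) :=
      Finset.filter_congr (fun i _ => by rw [and_comm])
    rw [e1] at h1
    rw [e2, e3] at h2
    have h3 := hAB k
    omega
  -- fiber lower bound
  have hfib : ∀ k : ℕ, min k (s - 1) + 1 - (k - (m - 1))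
      ≤ (((Finset.range s) ×ˢ (Finset.range m)).filter fun p => p.1 + p.2 = k).card := by
    intro k
    have hinj : (Finset.Icc (k - (m - 1)) (min k (s - 1))).card
        ≤ (((Finset.range s) ×ˢ (Finset.range m)).filter fun p => p.1 + p.2 = k).card := by
      apply Finset.card_le_card_of_injOn (fun a => (a, k - a))
      · intro a ha
        simp only [Finset.coe_Icc, Set.mem_Icc] at ha
        simp only [Finset.coe_filter, Set.mem_setOf_eq, Finset.mem_filter, Finset.mem_product, Finset.mem_range]
        omega
      · intro a _ b _ h
        exact congrArg Prod.fst h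
    rwa [Nat.card_Icc] at hinj
  -- fiber sum
  have hNsum : ∑ k ∈ Finset.range r,
      (((Finset.range s) ×ˢ (Finset.range m)).filter fun p => p.1 + p.2 = k).card = s * m := by
    have hmem : ∀ p ∈ (Finset.range s) ×ˢ (Finset.range m),
        (fun q : ℕ × ℕ => q.1 + q.2) p ∈ Finset.range r := by
      intro p hp
      simp only [Finset.mem_product, Finset.mem_range] at hp ⊢
      omega
    have h1 := Finset.card_eq_sum_card_fiberwise hmem
    rw [Finset.card_product, Finset.card_range, Finset.card_range] at h1
    exact h1.symm
  -- pointwise bound e_k ≤ N_k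
  have hEleN : ∀ k ∈ Finset.range r,
      (Finset.univ.filter fun i : Fin r => (σ i : ℕ) ≤ k ∧ k < (i : ℕ)).card
      ≤ (((Finset.range s) ×ˢ (Finset.range m)).filter fun p => p.1 + p.2 = k).card := by
    intro k hk
    rw [Finset.mem_range] at hk
    have hb1 : (Finset.univ.filter fun i : Fin r => (σ i : ℕ) ≤ k ∧ k < (i : ℕ)).card ≤ s := by
      rw [← hDcard]
      apply Finset.card_le_card
      intro i hi
      simp only [Finset.mem_filter, Finset.mem_univ, true_and] at hi ⊢
      rw [Fin.lt_def]
      omega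
    have hb2 : (Finset.univ.filter fun i : Fin r => (σ i : ℕ) ≤ k ∧ k < (i : ℕ)).card ≤ k + 1 := by
      rw [← hcard_le k hk, ← hAB k]
      apply Finset.card_le_card
      intro i hi
      simp only [Finset.mem_filter, Finset.mem_univ, true_and] at hi ⊢
      exact hi.1
    have hb3 : (Finset.univ.filter fun i : Fin r => (σ i : ℕ) ≤ k ∧ k < (i : ℕ)).card ≤ r - (k + 1) := by
      rw [← hcard_ge (k + 1)]
      apply Finset.card_le_card
      intro i hi
      simp only [Finset.mem_filter, Finset.mem_univ, true_and] at hi ⊢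
      omega
    have hb4 : (Finset.univ.filter fun i : Fin r => (σ i : ℕ) ≤ k ∧ k < (i : ℕ)).card ≤ m := by
      rw [hef k, ← hJcard]
      apply Finset.card_le_card
      intro i hi
      simp only [Finset.mem_filter, Finset.mem_univ, true_and] at hi ⊢
      rw [Fin.lt_def]
      omega
    have hb5 := hfib k
    omega
  -- equality everywhere
  have hEsum : ∑ k ∈ Finset.range r,
      (Finset.univ.filter fun i : Fin r => (σ i : ℕ) ≤ k ∧ k < (i : ℕ)).card = s * m := by
    have h1 : ∑ k ∈ Finset.range r,
        ((Finset.univ.filter fun i : Fin r => (σ i : ℕ) ≤ k ∧ k < (i : ℕ)).card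
          + (Finset.univ.filter fun i : Fin r => (i : ℕ) ≤ k ∧ k < (σ i : ℕ)).card)
        = ∑ k ∈ Finset.range r,
          2 * (Finset.univ.filter fun i : Fin r => (σ i : ℕ) ≤ k ∧ k < (i : ℕ)).card := by
      refine Finset.sum_congr rfl fun k _ => ?_
      rw [← hef k]
      ring
    rw [h1] at hht2
    have h2 : ∑ k ∈ Finset.range r,
        2 * (Finset.univ.filter fun i : Fin r => (σ i : ℕ) ≤ k ∧ k < (i : ℕ)).card
        = 2 * ∑ k ∈ Finset.range r,
          (Finset.univ.filter fun i : Fin r => (σ i : ℕ) ≤ k ∧ k < (i : ℕ)).card :=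
      (Finset.mul_sum _ _ _).symm
    have h3 : 2 * s * m = 2 * (s * m) := by ring
    omega
  have hEeq : ∀ k ∈ Finset.range r,
      (Finset.univ.filter fun i : Fin r => (σ i : ℕ) ≤ k ∧ k < (i : ℕ)).card
      = (((Finset.range s) ×ˢ (Finset.range m)).filter fun p => p.1 + p.2 = k).card :=
    (Finset.sum_eq_sum_iff_of_le hEleN).mp (hEsum.trans hNsum.symm)
  -- extraction at k = m - 1
  have hk0 : m - 1 < r := by omega
  have hEk0 : min s m ≤
      (Finset.univ.filter fun i : Fin r => (σ i : ℕ) ≤ m - 1 ∧ m - 1 < (i : ℕ)).card := by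
    have h1 := hEeq (m - 1) (Finset.mem_range.mpr hk0)
    have h2 := hfib (m - 1)
    omega
  have hDU : ∀ i : Fin r, σ i < i ↔ m ≤ (i : ℕ) := by
    rcases le_total s m with hsm | hms
    · -- drops side
      have hsub : (Finset.univ.filter fun i : Fin r => (σ i : ℕ) ≤ m - 1 ∧ m - 1 < (i : ℕ))
          ⊆ (Finset.univ.filter fun i : Fin r => σ i < i ∧ m ≤ (i : ℕ)) := by
        intro i hi
        simp only [Finset.mem_filter, Finset.mem_univ, true_and] at hi ⊢
        rw [Fin.lt_def]
        omega
      have hc1 : s ≤ (Finset.univ.filter fun i : Fin r => σ i < i ∧ m ≤ (i : ℕ)).card := by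
        have := Finset.card_le_card hsub
        omega
      have hd1 : (Finset.univ.filter fun i : Fin r => σ i < i ∧ m ≤ (i : ℕ))
          ⊆ (Finset.univ.filter fun i : Fin r => σ i < i) := by
        intro i hi
        simp only [Finset.mem_filter, Finset.mem_univ, true_and] at hi ⊢
        exact hi.1
      have hd2 : (Finset.univ.filter fun i : Fin r => σ i < i ∧ m ≤ (i : ℕ))
          ⊆ (Finset.univ.filter fun i : Fin r => m ≤ (i : ℕ)) := by
        intro i hi
        simp only [Finset.mem_filter, Finset.mem_univ, true_and] at hi ⊢
        exact hi.2
      have heq1 := Finset.eq_of_subset_of_card_le hd1 (by omega)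
      have heq2 := Finset.eq_of_subset_of_card_le hd2 (by rw [hcard_ge m]; omega)
      have heq : (Finset.univ.filter fun i : Fin r => σ i < i)
          = (Finset.univ.filter fun i : Fin r => m ≤ (i : ℕ)) := heq1.symm.trans heq2
      intro i
      have := Finset.ext_iff.mp heq i
      simpa using this
    · -- jumps side
      have hc0 : m ≤
          (Finset.univ.filter fun i : Fin r => (i : ℕ) ≤ m - 1 ∧ m - 1 < (σ i : ℕ)).card := by
        have h1 := hef (m - 1)
        omega
      have hsub : (Finset.univ.filter fun i : Fin r => (i : ℕ) ≤ m - 1 ∧ m - 1 < (σ i : ℕ))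
          ⊆ (Finset.univ.filter fun i : Fin r => i < σ i ∧ (i : ℕ) ≤ m - 1) := by
        intro i hi
        simp only [Finset.mem_filter, Finset.mem_univ, true_and] at hi ⊢
        rw [Fin.lt_def]
        omega
      have hc1 : m ≤ (Finset.univ.filter fun i : Fin r => i < σ i ∧ (i : ℕ) ≤ m - 1).card := by
        have := Finset.card_le_card hsub
        omega
      have hd1 : (Finset.univ.filter fun i : Fin r => i < σ i ∧ (i : ℕ) ≤ m - 1)
          ⊆ (Finset.univ.filter fun i : Fin r => i < σ i) := by
        intro i hi
        simp only [Finset.mem_filter, Finset.mem_univ, true_and] at hi ⊢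
        exact hi.1
      have hd2 : (Finset.univ.filter fun i : Fin r => i < σ i ∧ (i : ℕ) ≤ m - 1)
          ⊆ (Finset.univ.filter fun i : Fin r => (i : ℕ) ≤ m - 1) := by
        intro i hi
        simp only [Finset.mem_filter, Finset.mem_univ, true_and] at hi ⊢
        exact hi.2
      have heq1 := Finset.eq_of_subset_of_card_le hd1 (by rw [hJcard]; omega)
      have heq2 := Finset.eq_of_subset_of_card_le hd2
        (by rw [hcard_le (m - 1) (by omega)]; omega)
      have heq : (Finset.univ.filter fun i : Fin r => i < σ i)
          = (Finset.univ.filter fun i : Fin r => (i : ℕ) ≤ m - 1) := heq1.symm.trans heq2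
      intro i
      have h4 := Finset.ext_iff.mp heq i
      simp only [Finset.mem_filter, Finset.mem_univ, true_and] at h4
      have h5 := htri i
      constructor
      · intro hlt
        by_contra hc
        have h6 : (i : ℕ) ≤ m - 1 := by omega
        exact lt_asymm hlt (h4.mpr h6)
      · intro hmi
        have hn : ¬ (i : ℕ) ≤ m - 1 := by omega
        by_contra hc
        exact (mt h4.mp hn) (h5.mp hc)
  intro i
  have h1 := hDU i
  have h2 := htri i
  constructor
  · rw [h1]; omega
  · rw [← h2, h1]; omega

end PermStats
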